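/- arXiv:2410.01760 — 3 statements merged into one kernel-verified Lean document; each statement's English description precedes it below -/
import Mathlib

section
/- Let B be the BlindOracle strategy and let H_B be any eviction graph of its run. Then the number of edges of H_B is at most η, the total prediction loss: |E(H_B)| ≤ η. -/
namespace Caching

attribute [local instance low] Classical.propDecidable

/-- A run of a feasible eviction strategy on the request sequence `σ` with cache size `k`
and time horizon `T`.  `C t` is the cache after processing request `t` (with `C 0 = ∅`),
and `p t` is the page evicted at time `t` (meaningful at full-cache misses). -/
structure CacheRun (S : Type) [DecidableEq S] (k T : ℕ) (σ : ℕ → S) where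
  C : ℕ → Finset S
  p : ℕ → S
  init : C 0 = ∅
  card_le : ∀ t, (C t).card ≤ k
  hit : ∀ t, 1 ≤ t → t ≤ T → (σ t ∈ C (t - 1) ∨ (C (t - 1)).card < k) →
      C t = insert (σ t) (C (t - 1))
  evict_mem : ∀ t, 1 ≤ t → t ≤ T → σ t ∉ C (t - 1) → (C (t - 1)).card = k →
      p t ∈ C (t - 1)
  evict : ∀ t, 1 ≤ t → t ≤ T → σ t ∉ C (t - 1) → (C (t - 1)).card = k →
      C t = insert (σ t) ((C (t - 1)).erase (p t))

variable {S : Type} [DecidableEq S]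

/- `nextReq σ T t` is `ν(t)`: the first time `s > t` (with `s ≤ T`) at which the page
`σ t` is requested again, and `T + 1` if there is no such time. -/
open Classical in
noncomputable def nextReq (σ : ℕ → S) (T t : ℕ) : ℕ :=
  if h : ∃ s, t < s ∧ s ≤ T ∧ σ s = σ t then Nat.find h else T + 1

/-- The total prediction loss `η = Σ_{t=1}^T |ν(t) - ω(t)|`. -/
noncomputable def totalLoss (σ : ℕ → S) (T : ℕ) (ω : ℕ → ℕ) : ℕ :=
  ∑ t ∈ Finset.Icc 1 T, Nat.dist (nextReq σ T t) (ω t)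

/-- `I_Q(t)`: indices of the last requests (up to time `t`) of the currently cached pages. -/
noncomputable def lastIdx {k T : ℕ} {σ : ℕ → S} (R : CacheRun S k T σ) (t : ℕ) : Finset ℕ :=
  (Finset.Icc 1 t).filter fun i => σ i ∈ R.C t ∧ ∀ j ∈ Finset.Icc (i + 1) t, σ j ≠ σ i

/-- Time `t` is a full-cache miss (an eviction step). -/
def EvictStep {k T : ℕ} {σ : ℕ → S} (R : CacheRun S k T σ) (t : ℕ) : Prop :=
  1 ≤ t ∧ t ≤ T ∧ σ t ∉ R.C (t - 1) ∧ (R.C (t - 1)).card = k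

/-- At time `t` the run evicts the page whose last-request index is `i`. -/
def EvictsIdx {k T : ℕ} {σ : ℕ → S} (R : CacheRun S k T σ) (t i : ℕ) : Prop :=
  EvictStep R t ∧ i ∈ lastIdx R (t - 1) ∧ R.p t = σ i

/-- `OBJ_Q`: the number of cache misses of the run. -/
noncomputable def misses {k T : ℕ} {σ : ℕ → S} (R : CacheRun S k T σ) : ℕ :=
  ((Finset.Icc 1 T).filter fun t => σ t ∉ R.C (t - 1)).card

/-- Belady's algorithm: on a full-cache miss always evict the cached page with the
largest next-request time. -/
def IsBelady {k T : ℕ} {σ : ℕ → S} (A : CacheRun S k T σ) : Prop :=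
  ∀ t, EvictStep A t → ∀ i ∈ lastIdx A (t - 1), A.p t = σ i →
    ∀ j ∈ lastIdx A (t - 1), nextReq σ T j ≤ nextReq σ T i

/-- BlindOracle: on a full-cache miss always evict the cached page with the largest
predicted next-request time. -/
def IsBlindOracle {k T : ℕ} {σ : ℕ → S} (B : CacheRun S k T σ) (ω : ℕ → ℕ) : Prop :=
  ∀ t, EvictStep B t → ∀ i ∈ lastIdx B (t - 1), B.p t = σ i →
    ∀ j ∈ lastIdx B (t - 1), ω j ≤ ω i

/-- An eviction graph of a run: a directed graph on `{1,…,T}` whose every edge `(i, j)`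
corresponds to a distinct time (`time e`) at which the run made a mistake by evicting
page `σ j` while `i` was a strictly better eviction candidate in the cache. -/
structure EvictionGraph {k T : ℕ} {σ : ℕ → S} (R : CacheRun S k T σ) where
  E : Finset (ℕ × ℕ)
  time : ℕ × ℕ → ℕ
  time_inj : ∀ e ∈ E, ∀ e' ∈ E, time e = time e' → e = e'
  mistake : ∀ e ∈ E, EvictsIdx R (time e) e.2 ∧ e.1 ∈ lastIdx R (time e - 1) ∧
      nextReq σ T e.2 < nextReq σ T e.1

/-- The eviction at time `t` triggers the eviction at time `t'`: the page evicted
at `t` is next requested at `t' = ν(i)`, which is again an eviction step. -/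
def Triggers {k T : ℕ} {σ : ℕ → S} (R : CacheRun S k T σ) (t t' : ℕ) : Prop :=
  ∃ i, EvictsIdx R t i ∧ t' = nextReq σ T i ∧ ∃ j, EvictsIdx R t' j

/-- The eviction of the page with last-request index `i` triggers the eviction of the
page with last-request index `j` (at time `ν(i)`). -/
def TriggersIdx {k T : ℕ} {σ : ℕ → S} (R : CacheRun S k T σ) (i j : ℕ) : Prop :=
  (∃ t, EvictsIdx R t i) ∧ EvictsIdx R (nextReq σ T i) j

/-- The page requested at time `t` was never requested before. -/
def NewPage (σ : ℕ → S) (t : ℕ) : Prop := ∀ s, 1 ≤ s → s < t → σ s ≠ σ t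

/-- At time `t` the evicted page has the largest prediction among cached pages. -/
def BlindChoiceAt {k T : ℕ} {σ : ℕ → S} (R : CacheRun S k T σ) (ω : ℕ → ℕ) (t : ℕ) : Prop :=
  ∀ i ∈ lastIdx R (t - 1), R.p t = σ i → ∀ j ∈ lastIdx R (t - 1), ω j ≤ ω i

/-- Corrector's choice at time `t`: if some cached page has a provably wrong prediction
(`ω i < t`), evict such a page with minimal prediction; otherwise act as BlindOracle. -/
def CorrectorChoiceAt {k T : ℕ} {σ : ℕ → S} (R : CacheRun S k T σ) (ω : ℕ → ℕ) (t : ℕ) :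
    Prop :=
  ((∃ i ∈ lastIdx R (t - 1), ω i < t) →
    ∀ i ∈ lastIdx R (t - 1), R.p t = σ i →
      ω i < t ∧ ∀ j ∈ lastIdx R (t - 1), ω j < t → ω i ≤ ω j) ∧
  ((¬ ∃ i ∈ lastIdx R (t - 1), ω i < t) → BlindChoiceAt R ω t)

/-- The page requested at time `t` was last evicted (before `t`) at a step labeled with
strategy `s₀` (0 = BlindOracle, 1 = RandomAlg, 2 = Corrector). -/
def LastEvictedWith {k T : ℕ} {σ : ℕ → S} (R : CacheRun S k T σ) (strat : ℕ → Fin 3)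
    (t : ℕ) (s₀ : Fin 3) : Prop :=
  ∃ t₀, t₀ < t ∧ EvictStep R t₀ ∧ R.p t₀ = σ t ∧ strat t₀ = s₀ ∧
    ∀ t₁, t₀ < t₁ → t₁ < t → ¬(EvictStep R t₁ ∧ R.p t₁ = σ t)

/-- A run of the AlternatingOracle strategy (for a fixed realization of its random
choices), together with the labeling `strat` of which of the three strategies was used
at each eviction step: on a miss for a never-requested page use BlindOracle; if the
requested page was last evicted by BlindOracle use RandomAlg (an arbitrary cached page);
if by RandomAlg use Corrector; if by Corrector use BlindOracle. -/
def IsAlternatingOracle {k T : ℕ} {σ : ℕ → S} (R : CacheRun S k T σ) (ω : ℕ → ℕ)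
    (strat : ℕ → Fin 3) : Prop :=
  ∀ t, EvictStep R t →
    (NewPage σ t → strat t = 0 ∧ BlindChoiceAt R ω t) ∧
    (LastEvictedWith R strat t 0 → strat t = 1) ∧
    (LastEvictedWith R strat t 1 → strat t = 2 ∧ CorrectorChoiceAt R ω t) ∧
    (LastEvictedWith R strat t 2 → strat t = 0 ∧ BlindChoiceAt R ω t)

/-- AlternatingOracle driven by a seed `u` of uniform random values: at each eviction
step performed by RandomAlg at time `t`, the evicted page is the one whose last-request
index has rank `u t` among the `k` cached indices, so that for a uniformly random seed
the evicted page is uniform over the cache. -/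
def IsAlternatingOracleSeeded {k T : ℕ} {σ : ℕ → S} (R : CacheRun S k T σ) (ω : ℕ → ℕ)
    (strat : ℕ → Fin 3) (u : Fin (T + 1) → Fin k) : Prop :=
  IsAlternatingOracle R ω strat ∧
  ∀ t (h : EvictStep R t), strat t = 1 →
    ∀ i ∈ lastIdx R (t - 1), R.p t = σ i →
      ((lastIdx R (t - 1)).filter fun j => j < i).card =
        ((u ⟨t, Nat.lt_succ_of_le h.2.1⟩ : Fin k) : ℕ)

/-- The family of runs is adapted to the seeds: the behavior up to time `t` depends only
on the seed values with index at most `t` (the strategy is online). -/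
def Adapted {k T : ℕ} {σ : ℕ → S} (R : (Fin (T + 1) → Fin k) → CacheRun S k T σ)
    (strat : (Fin (T + 1) → Fin k) → ℕ → Fin 3) : Prop :=
  ∀ u u' t, (∀ s : Fin (T + 1), (s : ℕ) ≤ t → u s = u' s) →
    (R u).C t = (R u').C t ∧ (R u).p t = (R u').p t ∧ strat u t = strat u' t

/-- The probability of the outcome `x` for `T` i.i.d. Bernoulli(γ) random bits. -/
noncomputable def bernWeight (γ : ℝ) {T : ℕ} (x : Fin T → Bool) : ℝ :=
  ∏ i, if x i then γ else 1 - γ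

/-- `S(x, m)`: the number of ones among the first `m` coordinates of `x`. -/
noncomputable def scount {T : ℕ} (x : Fin T → Bool) (m : ℕ) : ℕ :=
  (Finset.univ.filter fun i : Fin T => (i : ℕ) < m ∧ x i).card

section Aux5

variable {k T : ℕ} {σ : ℕ → S}

lemma C_subset_insert (R : CacheRun S k T σ) {t : ℕ} (h1 : 1 ≤ t) (h2 : t ≤ T) :
    R.C t ⊆ insert (σ t) (R.C (t - 1)) := by
  by_cases hc : σ t ∈ R.C (t - 1) ∨ (R.C (t - 1)).card < k
  · rw [R.hit t h1 h2 hc]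
  · push_neg at hc
    have hcard : (R.C (t - 1)).card = k := le_antisymm (R.card_le _) hc.2
    rw [R.evict t h1 h2 hc.1 hcard]
    exact Finset.insert_subset_insert _ (Finset.erase_subset _ _)

lemma reenter (R : CacheRun S k T σ) (a : S) (t : ℕ) :
    ∀ t', t ≤ t' → t' ≤ T → a ∉ R.C t → a ∈ R.C t' →
      ∃ s, t < s ∧ s ≤ t' ∧ σ s = a := by
  intro t'
  induction t' with
  | zero =>
    intro h1 _ h3 h4
    exact absurd h4 (by simpa [Nat.le_zero.mp h1] using h3)
  | succ n ih =>
    intro h1 h2 h3 h4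
    rcases Nat.lt_or_ge t (n + 1) with hlt | hge
    · have hsub := C_subset_insert R (Nat.succ_le_succ (Nat.zero_le n)) h2
      change R.C (n + 1) ⊆ insert (σ (n + 1)) (R.C n) at hsub
      rcases Finset.mem_insert.mp (hsub h4) with heq | hmem
      · exact ⟨n + 1, hlt, le_refl _, heq.symm⟩
      · obtain ⟨s, hs1, hs2, hs3⟩ :=
          ih (Nat.lt_succ_iff.mp hlt) (le_trans (Nat.le_succ n) h2) h3 hmem
        exact ⟨s, hs1, le_trans hs2 (Nat.le_succ n), hs3⟩
    · exact absurd h4 ((le_antisymm h1 hge) ▸ h3)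

lemma evict_lt_false (R : CacheRun S k T σ) {t t' j : ℕ}
    (h : EvictsIdx R t j) (h' : EvictsIdx R t' j) (hlt : t < t') : False := by
  obtain ⟨⟨ht1, ht2, hmiss, hcard⟩, hmem, hp⟩ := h
  obtain ⟨⟨ht1', ht2', _, _⟩, hmem', _⟩ := h'
  simp only [lastIdx, Finset.mem_filter] at hmem hmem'
  obtain ⟨hIcc, hC, hlast⟩ := hmem
  obtain ⟨hIcc', hC', hlast'⟩ := hmem'
  have hne : σ j ≠ σ t := fun he => hmiss (he ▸ hC)
  have hCt : R.C t = insert (σ t) ((R.C (t - 1)).erase (R.p t)) :=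
    R.evict t ht1 ht2 hmiss hcard
  have hout : σ j ∉ R.C t := by
    rw [hCt]
    simp [hne, hp]
  have hj_le : j ≤ t - 1 := (Finset.mem_Icc.mp hIcc).2
  obtain ⟨s, hs1, hs2, hs3⟩ :=
    reenter R (σ j) t (t' - 1) (by omega) (by omega) hout hC'
  exact hlast' s (Finset.mem_Icc.mpr ⟨by omega, hs2⟩) hs3

lemma evictsIdx_time_unique (R : CacheRun S k T σ) {t t' j : ℕ}
    (h : EvictsIdx R t j) (h' : EvictsIdx R t' j) : t = t' := by
  rcases Nat.lt_trichotomy t t' with hlt | heq | hlt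
  · exact absurd (evict_lt_false R h h' hlt) (fun x => x)
  · exact heq
  · exact absurd (evict_lt_false R h' h hlt) (fun x => x)

lemma nextReq_le (σ : ℕ → S) (T t : ℕ) : nextReq σ T t ≤ T + 1 := by
  unfold nextReq
  split
  · rename_i h
    obtain ⟨s, hs⟩ := h
    exact le_trans (Nat.find_min' _ hs) (le_trans hs.2.1 (Nat.le_succ T))
  · exact le_refl _

lemma nextReq_spec {T j : ℕ} (hle : nextReq σ T j ≤ T) :
    j < nextReq σ T j ∧ σ (nextReq σ T j) = σ j ∧
      ∀ s, j < s → s ≤ T → s < nextReq σ T j → σ s ≠ σ j := by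
  unfold nextReq at hle ⊢
  split at hle
  · rename_i h
    rw [dif_pos h]
    refine ⟨(Nat.find_spec h).1, (Nat.find_spec h).2.2, ?_⟩
    intro s hs1 hs2 hs3 hcontra
    exact Nat.find_min h hs3 ⟨hs1, hs2, hcontra⟩
  · omega

lemma nextReq_inj {T j j' : ℕ} (hle : nextReq σ T j ≤ T)
    (heq : nextReq σ T j = nextReq σ T j') : j = j' := by
  by_contra hne
  have hle' : nextReq σ T j' ≤ T := heq ▸ hle
  obtain ⟨h1, h2, h3⟩ := nextReq_spec hle
  obtain ⟨h1', h2', h3'⟩ := nextReq_spec hle'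
  have hσ : σ j = σ j' := by rw [← h2, heq, h2']
  rcases Nat.lt_or_ge j j' with h | h
  · exact h3 j' h (by omega) (by omega) hσ.symm
  · exact h3' j (by omega) (by omega) (by omega) hσ

end Aux5

/-- Any eviction graph of a run of BlindOracle has at most `η` edges. -/
theorem stmt5 {S : Type} [DecidableEq S] (k T : ℕ) (hk : 1 ≤ k) (σ : ℕ → S) (ω : ℕ → ℕ)
    (B : CacheRun S k T σ) (hB : IsBlindOracle B ω) (H : EvictionGraph B) :
    H.E.card ≤ totalLoss σ T ω := by
  classical
  -- the charge function: charge edge `e` to `e.2` if its prediction is too large,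
  -- otherwise to `e.1`
  set f : ℕ × ℕ → ℕ := fun e => if nextReq σ T e.2 < ω e.2 then e.2 else e.1 with hf
  -- basic facts about an edge
  have efacts : ∀ e ∈ H.E,
      EvictsIdx B (H.time e) e.2 ∧
      nextReq σ T e.2 < nextReq σ T e.1 ∧
      ω e.1 ≤ ω e.2 ∧
      (1 ≤ e.1 ∧ e.1 ≤ T) ∧ (1 ≤ e.2 ∧ e.2 ≤ T) := by
    intro e he
    obtain ⟨hEv, hi, hν⟩ := H.mistake e he
    obtain ⟨hstep, hj, hp⟩ := hEv
    have hω : ω e.1 ≤ ω e.2 := hB (H.time e) hstep e.2 hj hp e.1 hi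
    have hi' := hi
    have hj' := hj
    simp only [lastIdx, Finset.mem_filter] at hi' hj'
    have hiIcc := Finset.mem_Icc.mp hi'.1
    have hjIcc := Finset.mem_Icc.mp hj'.1
    have ht2 : H.time e ≤ T := hstep.2.1
    exact ⟨⟨hstep, hj, hp⟩, hν, hω,
      ⟨hiIcc.1, by omega⟩, ⟨hjIcc.1, by omega⟩⟩
  have hmem : ∀ e ∈ H.E, f e ∈ Finset.Icc 1 T := by
    intro e he
    obtain ⟨_, _, _, hi, hj⟩ := efacts e he
    simp only [hf]
    split
    · exact Finset.mem_Icc.mpr hj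
    · exact Finset.mem_Icc.mpr hi
  rw [totalLoss]
  calc H.E.card
      = ∑ m ∈ Finset.Icc 1 T, (H.E.filter fun e => f e = m).card :=
        Finset.card_eq_sum_card_fiberwise hmem
    _ ≤ ∑ m ∈ Finset.Icc 1 T, Nat.dist (nextReq σ T m) (ω m) := by
        apply Finset.sum_le_sum
        intro m _
        by_cases hm : nextReq σ T m < ω m
        · -- charged via `e.2 = m`: at most one such edge
          have h2eq : ∀ e ∈ H.E.filter fun e => f e = m, e.2 = m := by
            intro e he
            obtain ⟨heE, hfe⟩ := Finset.mem_filter.mp he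
            obtain ⟨_, hν, hω, _, _⟩ := efacts e heE
            simp only [hf] at hfe
            split at hfe
            · exact hfe
            · -- `e.1 = m` and `ω e.2 ≤ ν e.2`: contradiction with `ν m < ω m`
              rename_i hcond
              subst hfe
              omega
          have hcard1 : (H.E.filter fun e => f e = m).card ≤ 1 := by
            apply Finset.card_le_one.mpr
            intro e he e' he'
            have h2 := h2eq e he
            have h2' := h2eq e' he'
            obtain ⟨heE, _⟩ := Finset.mem_filter.mp he
            obtain ⟨heE', _⟩ := Finset.mem_filter.mp he'
            have hEv := (efacts e heE).1
            have hEv' := (efacts e' heE').1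
            rw [h2] at hEv
            rw [h2'] at hEv'
            exact H.time_inj e heE e' heE' (evictsIdx_time_unique B hEv hEv')
          have : 1 ≤ Nat.dist (nextReq σ T m) (ω m) := by
            unfold Nat.dist
            omega
          omega
        · -- charged via `e.1 = m`: inject into `Ico (ω m) (ν m)` via `e ↦ ν e.2`
          have h1eq : ∀ e ∈ H.E.filter fun e => f e = m,
              e.1 = m ∧ ω e.2 ≤ nextReq σ T e.2 := by
            intro e he
            obtain ⟨heE, hfe⟩ := Finset.mem_filter.mp he
            simp only [hf] at hfe
            split at hfe
            · rename_i hcond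
              rw [hfe] at hcond
              omega
            · rename_i hcond
              exact ⟨hfe, by omega⟩
          have hbound : (H.E.filter fun e => f e = m).card ≤
              (Finset.Ico (ω m) (nextReq σ T m)).card := by
            apply Finset.card_le_card_of_injOn (fun e => nextReq σ T e.2)
            · intro e he
              obtain ⟨h1, hωle⟩ := h1eq e he
              obtain ⟨heE, _⟩ := Finset.mem_filter.mp he
              obtain ⟨_, hν, hω, _, _⟩ := efacts e heE
              rw [h1] at hν hω
              exact Finset.mem_Ico.mpr ⟨le_trans hω hωle, hν⟩
            · intro e he e' he' hνeq
              obtain ⟨h1, _⟩ := h1eq e he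
              obtain ⟨heE, _⟩ := Finset.mem_filter.mp he
              obtain ⟨heE', _⟩ := Finset.mem_filter.mp he'
              obtain ⟨hEv, hν, _, _, _⟩ := efacts e heE
              obtain ⟨hEv', _, _, _, _⟩ := efacts e' heE'
              have hleT : nextReq σ T e.2 ≤ T := by
                have := nextReq_le σ T e.1
                omega
              have h22 : e.2 = e'.2 := nextReq_inj hleT hνeq
              rw [h22] at hEv
              exact H.time_inj e heE e' heE' (evictsIdx_time_unique B hEv hEv')
          rw [Nat.card_Ico] at hbound
          have : nextReq σ T m - ω m ≤ Nat.dist (nextReq σ T m) (ω m) := by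
            unfold Nat.dist
            omega
          omega

end Caching
end

section
/- Let B be the AlternatingOracle strategy (on a fixed realization of its random choices) and let H_B be an eviction graph of its run with colored edges such that same-colored edges share a source and their targets, in order, form a chain. Suppose the edges (a, b₁),…,(a, b_d) all have the same color and (b₁,…,b_d) is a divisible chain. Let ψ denote the maximum of the number of short triples in the left group and the number of short triples in the right group of this chain. Then Σ_{i=1}^d η(b_i) ≥ (d/6 − ψ)²·k/20, where η(t) = |ν(t) − ω(t)|. -/
namespace Caching

attribute [local instance low] Classical.propDecidable

variable {S : Type} [DecidableEq S]

section Aux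

lemma count_pairs_le (s : Finset ℕ) :
    s.card * (s.card + 1) ≤ 2 * ∑ r ∈ s, (s.filter fun r' => r ≤ r').card := by
  induction s using Finset.strongInduction with
  | _ s ih =>
    rcases s.eq_empty_or_nonempty with rfl | hs
    · simp
    · have hmem := s.min'_mem hs
      set r₀ := s.min' hs with hr₀
      have h1 : (s.filter fun r' => r₀ ≤ r').card = s.card := by
        rw [Finset.filter_true_of_mem (fun x hx => s.min'_le x hx)]
      have hsum : ∑ r ∈ s, (s.filter fun r' => r ≤ r').card
          = (s.filter fun r' => r₀ ≤ r').card
            + ∑ r ∈ s.erase r₀, (s.filter fun r' => r ≤ r').card :=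
        (Finset.add_sum_erase s _ hmem).symm
      have h2 := ih (s.erase r₀) (Finset.erase_ssubset hmem)
      have h3 : ∑ r ∈ s.erase r₀, ((s.erase r₀).filter fun r' => r ≤ r').card
          ≤ ∑ r ∈ s.erase r₀, (s.filter fun r' => r ≤ r').card :=
        Finset.sum_le_sum fun r _ => Finset.card_le_card
          (Finset.filter_subset_filter _ (Finset.erase_subset _ _))
      have hcard : (s.erase r₀).card = s.card - 1 := Finset.card_erase_of_mem hmem
      have hpos : 1 ≤ s.card := Finset.card_pos.2 hs
      obtain ⟨c, hc⟩ : ∃ c, s.card = c + 1 := ⟨s.card - 1, by omega⟩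
      rw [hcard, hc] at h2
      simp only [Nat.add_sub_cancel] at h2
      rw [hsum, h1, hc]
      nlinarith [h2, h3]

lemma count_pairs_le' (s : Finset ℕ) :
    s.card * (s.card + 1) ≤ 2 * ∑ r ∈ s, (s.filter fun r' => r' ≤ r).card := by
  induction s using Finset.strongInduction with
  | _ s ih =>
    rcases s.eq_empty_or_nonempty with rfl | hs
    · simp
    · have hmem := s.max'_mem hs
      set r₀ := s.max' hs with hr₀
      have h1 : (s.filter fun r' => r' ≤ r₀).card = s.card := by
        rw [Finset.filter_true_of_mem (fun x hx => s.le_max' x hx)]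
      have hsum : ∑ r ∈ s, (s.filter fun r' => r' ≤ r).card
          = (s.filter fun r' => r' ≤ r₀).card
            + ∑ r ∈ s.erase r₀, (s.filter fun r' => r' ≤ r).card :=
        (Finset.add_sum_erase s _ hmem).symm
      have h2 := ih (s.erase r₀) (Finset.erase_ssubset hmem)
      have h3 : ∑ r ∈ s.erase r₀, ((s.erase r₀).filter fun r' => r' ≤ r).card
          ≤ ∑ r ∈ s.erase r₀, (s.filter fun r' => r' ≤ r).card :=
        Finset.sum_le_sum fun r _ => Finset.card_le_card
          (Finset.filter_subset_filter _ (Finset.erase_subset _ _))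
      have hcard : (s.erase r₀).card = s.card - 1 := Finset.card_erase_of_mem hmem
      have hpos : 1 ≤ s.card := Finset.card_pos.2 hs
      obtain ⟨c, hc⟩ : ∃ c, s.card = c + 1 := ⟨s.card - 1, by omega⟩
      rw [hcard, hc] at h2
      simp only [Nat.add_sub_cancel] at h2
      rw [hsum, h1, hc]
      nlinarith [h2, h3]

variable {k T : ℕ} {σ : ℕ → S}

lemma mem_C_self (R : CacheRun S k T σ) {s : ℕ} (h1 : 1 ≤ s) (h2 : s ≤ T) :
    σ s ∈ R.C s := by
  by_cases h : σ s ∈ R.C (s - 1) ∨ (R.C (s - 1)).card < k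
  · rw [R.hit s h1 h2 h]; exact Finset.mem_insert_self _ _
  · push_neg at h
    have hcard : (R.C (s - 1)).card = k := le_antisymm (R.card_le _) h.2
    rw [R.evict s h1 h2 h.1 hcard]; exact Finset.mem_insert_self _ _

lemma exhaust (R : CacheRun S k T σ) (strat : ℕ → Fin 3) {t : ℕ} (h : EvictStep R t) :
    NewPage σ t ∨ ∃ s₀, LastEvictedWith R strat t s₀ := by
  by_cases hnew : NewPage σ t
  · exact Or.inl hnew
  right
  unfold NewPage at hnew
  push_neg at hnew
  obtain ⟨s, hs1, hst, hss⟩ := hnew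
  obtain ⟨ht1, htT, hout, hcard⟩ := h
  have hsle : s ≤ t - 1 := by omega
  have hPs₁ : 1 ≤ Nat.findGreatest (fun s' => 1 ≤ s' ∧ σ s' = σ t) (t - 1) ∧
      σ (Nat.findGreatest (fun s' => 1 ≤ s' ∧ σ s' = σ t) (t - 1)) = σ t :=
    Nat.findGreatest_spec (P := fun s' => 1 ≤ s' ∧ σ s' = σ t) hsle ⟨hs1, hss⟩
  set s₁ := Nat.findGreatest (fun s' => 1 ≤ s' ∧ σ s' = σ t) (t - 1) with hs₁
  have hs₁le : s₁ ≤ t - 1 := Nat.findGreatest_le _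
  have hmemS : σ t ∈ R.C s₁ := by
    rw [← hPs₁.2]; exact mem_C_self R hPs₁.1 (by omega)
  have hQt₀ : σ t ∈ R.C (Nat.findGreatest (fun t₁ => σ t ∈ R.C t₁) (t - 1)) :=
    Nat.findGreatest_spec (P := fun t₁ => σ t ∈ R.C t₁) hs₁le hmemS
  set t₀ := Nat.findGreatest (fun t₁ => σ t ∈ R.C t₁) (t - 1) with ht₀
  have ht₀le : t₀ ≤ t - 1 := Nat.findGreatest_le _
  have hgr : ∀ t₁, t₀ < t₁ → t₁ ≤ t - 1 → σ t ∉ R.C t₁ := by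
    intro t₁ h1 h2
    exact Nat.findGreatest_is_greatest h1 h2
  have ht₀lt : t₀ < t - 1 := by
    rcases lt_or_eq_of_le ht₀le with h | h
    · exact h
    · exfalso; rw [h] at hQt₀; exact hout hQt₀
  have ht'1 : 1 ≤ t₀ + 1 := by omega
  have ht'T : t₀ + 1 ≤ T := by omega
  have hpred : t₀ + 1 - 1 = t₀ := by omega
  have hnotin : σ t ∉ R.C (t₀ + 1) := hgr (t₀ + 1) (by omega) (by omega)
  have hmiss : σ (t₀ + 1) ∉ R.C (t₀ + 1 - 1) ∧ (R.C (t₀ + 1 - 1)).card = k := by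
    by_contra hcon
    have hhit : σ (t₀ + 1) ∈ R.C (t₀ + 1 - 1) ∨ (R.C (t₀ + 1 - 1)).card < k := by
      by_cases h1 : σ (t₀ + 1) ∈ R.C (t₀ + 1 - 1)
      · exact Or.inl h1
      · right
        have hle := R.card_le (t₀ + 1 - 1)
        rcases Nat.lt_or_ge (R.C (t₀ + 1 - 1)).card k with h2 | h2
        · exact h2
        · exact absurd ⟨h1, by omega⟩ hcon
    have hC := R.hit (t₀ + 1) ht'1 ht'T hhit
    apply hnotin
    rw [hC, hpred]
    exact Finset.mem_insert_of_mem hQt₀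
  have hstep : EvictStep R (t₀ + 1) := ⟨ht'1, ht'T, hmiss.1, hmiss.2⟩
  have hpev : R.p (t₀ + 1) = σ t := by
    by_contra hne
    apply hnotin
    rw [R.evict (t₀ + 1) ht'1 ht'T hmiss.1 hmiss.2, hpred]
    apply Finset.mem_insert_of_mem
    exact Finset.mem_erase.2 ⟨fun hc => hne hc.symm, hQt₀⟩
  refine ⟨strat (t₀ + 1), t₀ + 1, by omega, hstep, hpev, rfl, ?_⟩
  rintro t₁ h1 h2 ⟨hstep₁, hp₁⟩
  have hmem2 := R.evict_mem t₁ hstep₁.1 hstep₁.2.1 hstep₁.2.2.1 hstep₁.2.2.2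
  rw [hp₁] at hmem2
  exact hgr (t₁ - 1) (by omega) (by omega) hmem2

lemma blind_of_strat0 {R : CacheRun S k T σ} {ω : ℕ → ℕ} {strat : ℕ → Fin 3}
    (hR : IsAlternatingOracle R ω strat) {t : ℕ} (h : EvictStep R t)
    (h0 : strat t = 0) : BlindChoiceAt R ω t := by
  obtain ⟨c1, c2, c3, c4⟩ := hR t h
  rcases exhaust R strat h with hnew | ⟨s₀, hle⟩
  · exact (c1 hnew).2
  · fin_cases s₀
    · exact absurd ((c2 hle).symm.trans h0) (by decide)
    · exact absurd (((c3 hle).1).symm.trans h0) (by decide)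
    · exact (c4 hle).2

lemma corrector_of_strat2 {R : CacheRun S k T σ} {ω : ℕ → ℕ} {strat : ℕ → Fin 3}
    (hR : IsAlternatingOracle R ω strat) {t : ℕ} (h : EvictStep R t)
    (h2 : strat t = 2) : CorrectorChoiceAt R ω t := by
  obtain ⟨c1, c2, c3, c4⟩ := hR t h
  rcases exhaust R strat h with hnew | ⟨s₀, hle⟩
  · exact absurd (((c1 hnew).1).symm.trans h2) (by decide)
  · fin_cases s₀
    · exact absurd ((c2 hle).symm.trans h2) (by decide)
    · exact (c3 hle).2
    · exact absurd (((c4 hle).1).symm.trans h2) (by decide)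

lemma nextReq_gt {T t i : ℕ} {σ : ℕ → S} (hT : t ≤ T)
    (h : ∀ s, i < s → s ≤ t → σ s ≠ σ i) : t < nextReq σ T i := by
  unfold nextReq
  split
  · next hex =>
      by_contra hle
      push_neg at hle
      obtain ⟨h1, h2, h3⟩ := Nat.find_spec hex
      exact h _ h1 hle h3
  · omega

lemma nextReq_gt_of_evictsIdx {R : CacheRun S k T σ} {t i : ℕ} (h : EvictsIdx R t i) :
    t < nextReq σ T i := by
  obtain ⟨⟨h1, h2, h3, h4⟩, hmem, hp⟩ := h
  simp only [lastIdx, Finset.mem_filter, Finset.mem_Icc] at hmem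
  obtain ⟨⟨hi1, hi2⟩, hC, hlast⟩ := hmem
  apply nextReq_gt h2
  intro s hs1 hs2 hcon
  rcases eq_or_lt_of_le hs2 with heq | hlt
  · subst heq; rw [← hcon] at hC; exact h3 hC
  · exact hlast s ⟨by omega, by omega⟩ hcon

end Aux

/-- For a run of AlternatingOracle (fixed realization) and a colored
eviction graph whose same-colored edges share a source and whose targets form chains, if
the edges `(a, b 0), …, (a, b (d-1))` all have the same color, `(b 0, …, b (d-1))` is a
divisible chain consisting of `2m` triples (so `d = 6m`), and `ψ` is the maximum of the
numbers of short triples in the left and in the right group, then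
`Σ_i η(b i) ≥ (d/6 − ψ)²·k/20`. -/
theorem stmt11 {S : Type} [DecidableEq S] (k T : ℕ) (hk : 1 ≤ k) (σ : ℕ → S) (ω : ℕ → ℕ)
    (R : CacheRun S k T σ) (strat : ℕ → Fin 3) (hR : IsAlternatingOracle R ω strat)
    (H : EvictionGraph R) (col : ℕ × ℕ → ℕ)
    (hsrc : ∀ e ∈ H.E, ∀ e' ∈ H.E, col e = col e' → e.1 = e'.1)
    (hglobal : ∀ c : ℕ, ∃ (d' : ℕ) (a' : ℕ) (b' : ℕ → ℕ),
        (H.E.filter fun e => col e = c) = (Finset.range d').image (fun x => (a', b' x)) ∧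
        (∀ x < d', ∀ x' < d', b' x = b' x' → x = x') ∧
        (∀ x, x + 1 < d' → TriggersIdx R (b' x) (b' (x + 1))))
    (a c₀ d m : ℕ) (b τ : ℕ → ℕ)
    (hd : d = 6 * m)
    (hedges : ∀ i < d, (a, b i) ∈ H.E ∧ col (a, b i) = c₀ ∧ H.time (a, b i) = τ i)
    (honly : ∀ e ∈ H.E, col e = c₀ → ∃ i < d, e = (a, b i))
    (hEv : ∀ i < d, EvictsIdx R (τ i) (b i))
    (hchain : ∀ i, i + 1 < d → τ (i + 1) = nextReq σ T (b i))
    (htriple : ∀ r < 2 * m, strat (τ (3 * r)) = 0 ∧ strat (τ (3 * r + 1)) = 1 ∧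
        strat (τ (3 * r + 2)) = 2)
    (ψ : ℕ)
    (hψ : ψ = max
        (((Finset.range m).filter fun r =>
            10 * (τ (3 * r + 2) - τ (3 * r + 1)) ≤ k).card)
        (((Finset.Ico m (2 * m)).filter fun r =>
            10 * (τ (3 * r + 2) - τ (3 * r + 1)) ≤ k).card)) :
    ((d : ℝ) / 6 - ψ) ^ 2 * k / 20 ≤
      ∑ i ∈ Finset.range d, (Nat.dist (nextReq σ T (b i)) (ω (b i)) : ℝ) := by
  rcases Nat.eq_zero_or_pos m with hm0 | hm
  · have hd0 : d = 0 := by omega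
    subst hm0
    simp only [Nat.mul_zero, Finset.range_zero, Finset.Ico_self, Finset.filter_empty,
      Finset.card_empty, max_self] at hψ
    rw [hd0, hψ]
    simp
  have hstep : ∀ i, i < d → EvictStep R (τ i) := fun i hi => (hEv i hi).1
  have hbmem : ∀ i, i < d → b i ∈ lastIdx R (τ i - 1) := fun i hi => (hEv i hi).2.1
  have hbp : ∀ i, i < d → R.p (τ i) = σ (b i) := fun i hi => (hEv i hi).2.2
  have hnu_gt : ∀ i, i < d → τ i < nextReq σ T (b i) :=
    fun i hi => nextReq_gt_of_evictsIdx (hEv i hi)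
  have hstrict : ∀ i, i + 1 < d → τ i < τ (i + 1) := by
    intro i hi
    rw [hchain i hi]
    exact hnu_gt i (by omega)
  have hmono : ∀ i j, i ≤ j → j < d → τ i ≤ τ j := by
    intro i j hij hjd
    induction j, hij using Nat.le_induction with
    | base => exact le_rfl
    | succ n hn ih => exact le_trans (ih (by omega)) (le_of_lt (hstrict n hjd))
  have haM : ∀ i, i < d → a ∈ lastIdx R (τ i - 1) := by
    intro i hi
    have h := H.mistake (a, b i) (hedges i hi).1
    rw [(hedges i hi).2.2] at h
    exact h.2.1
  have hblind : ∀ r, r < 2 * m → ω a ≤ ω (b (3 * r)) := by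
    intro r hr
    have hi : 3 * r < d := by omega
    exact blind_of_strat0 hR (hstep _ hi) (htriple r hr).1 (b (3 * r)) (hbmem _ hi)
      (hbp _ hi) a (haM _ hi)
  have hcorr : ∀ r, r < 2 * m → ω a < τ (3 * r + 2) → ω (b (3 * r + 2)) ≤ ω a := by
    intro r hr hwa
    have hi : 3 * r + 2 < d := by omega
    have hC := corrector_of_strat2 hR (hstep _ hi) (htriple r hr).2.2
    have hmin := hC.1 ⟨a, haM _ hi, hwa⟩ (b (3 * r + 2)) (hbmem _ hi) (hbp _ hi)
    exact hmin.2 a (haM _ hi) hwa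
  have hP : ∀ r, r < m → ∀ j, r < j → j ≤ m →
      τ (3 * r + 1) + ∑ r' ∈ Finset.Ico r j, (τ (3 * r' + 2) - τ (3 * r' + 1))
        ≤ τ (3 * j) := by
    intro r hr j hj
    induction j, hj using Nat.le_induction with
    | base =>
      intro hrm1
      rw [Finset.sum_Ico_succ_top (le_refl r), Finset.Ico_self, Finset.sum_empty]
      simp only [Nat.succ_eq_add_one]
      have h1 : τ (3 * r + 1) ≤ τ (3 * r + 2) := hmono _ _ (by omega) (by omega)
      have h2 : τ (3 * r + 2) ≤ τ (3 * (r + 1)) := hmono _ _ (by omega) (by omega)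
      omega
    | succ n hn ih =>
      intro hnm
      have ih' := ih (by omega)
      rw [Finset.sum_Ico_succ_top (by omega : r ≤ n)]
      have h1 : τ (3 * n) ≤ τ (3 * n + 1) := hmono _ _ (by omega) (by omega)
      have h2 : τ (3 * n + 1) ≤ τ (3 * n + 2) := hmono _ _ (by omega) (by omega)
      have h3 : τ (3 * n + 2) ≤ τ (3 * (n + 1)) := hmono _ _ (by omega) (by omega)
      omega
  have hQ2 : ∀ r, m ≤ r → r < 2 * m →
      τ (3 * m) + ∑ r' ∈ Finset.Icc m r, (τ (3 * r' + 2) - τ (3 * r' + 1))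
        ≤ τ (3 * r + 2) := by
    intro r hr
    induction r, hr using Nat.le_induction with
    | base =>
      intro h2m
      rw [Finset.Icc_self, Finset.sum_singleton]
      have h1 : τ (3 * m) ≤ τ (3 * m + 1) := hmono _ _ (by omega) (by omega)
      have h2 : τ (3 * m + 1) ≤ τ (3 * m + 2) := hmono _ _ (by omega) (by omega)
      omega
    | succ n hn ih =>
      intro h2m
      have ih' := ih (by omega)
      rw [Finset.sum_Icc_succ_top (by omega : m ≤ n + 1)]
      have h1 : τ (3 * n + 2) ≤ τ (3 * (n + 1) + 1) := hmono _ _ (by omega) (by omega)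
      have h2 : τ (3 * (n + 1) + 1) ≤ τ (3 * (n + 1) + 2) := hmono _ _ (by omega) (by omega)
      omega
  set N := ∑ i ∈ Finset.range d, Nat.dist (nextReq σ T (b i)) (ω (b i)) with hNdef
  have hψm : ψ ≤ m := by
    rw [hψ]
    apply max_le
    · exact le_trans (Finset.card_filter_le _ _) (le_of_eq (Finset.card_range m))
    · refine le_trans (Finset.card_filter_le _ _) ?_
      rw [Nat.card_Ico]
      omega
  suffices hmain : k * (m - ψ) ^ 2 ≤ 20 * N by
    have hcast : ∑ i ∈ Finset.range d, (Nat.dist (nextReq σ T (b i)) (ω (b i)) : ℝ)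
        = (N : ℝ) := by
      rw [hNdef]; push_cast; ring
    rw [hcast]
    have h1 : ((d : ℝ) / 6 - ψ) = ((m - ψ : ℕ) : ℝ) := by
      rw [hd]
      push_cast [hψm]
      ring
    rw [h1, div_le_iff₀ (by norm_num : (0:ℝ) < 20)]
    calc ((m - ψ : ℕ) : ℝ) ^ 2 * k = ((k * (m - ψ) ^ 2 : ℕ) : ℝ) := by push_cast; ring
      _ ≤ ((20 * N : ℕ) : ℝ) := by exact_mod_cast hmain
      _ = (N : ℝ) * 20 := by push_cast; ring
  rcases le_or_gt (τ (3 * m)) (ω a) with hcase | hcase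
  · -- Case A: the prediction of `a` is large; use the left group (BlindOracle steps).
    set Lns := (Finset.range m).filter
        (fun r => ¬ 10 * (τ (3 * r + 2) - τ (3 * r + 1)) ≤ k) with hLdef
    have hLcard : ((Finset.range m).filter
        (fun r => 10 * (τ (3 * r + 2) - τ (3 * r + 1)) ≤ k)).card + Lns.card = m := by
      rw [hLdef, Finset.card_filter_add_card_filter_not, Finset.card_range]
    have hn : m - ψ ≤ Lns.card := by
      have hL : ((Finset.range m).filter
          (fun r => 10 * (τ (3 * r + 2) - τ (3 * r + 1)) ≤ k)).card ≤ ψ := by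
        rw [hψ]; exact le_max_left _ _
      omega
    have hkey : ∀ r ∈ Lns, (k + 1) * (Lns.filter fun r' => r ≤ r').card
        ≤ 10 * Nat.dist (nextReq σ T (b (3 * r))) (ω (b (3 * r))) := by
      intro r hrL
      have hrL' := hrL
      rw [hLdef, Finset.mem_filter, Finset.mem_range] at hrL'
      obtain ⟨hrm, _⟩ := hrL'
      have h1 : τ (3 * m) ≤ ω (b (3 * r)) := le_trans hcase (hblind r (by omega))
      have h2 : nextReq σ T (b (3 * r)) = τ (3 * r + 1) := (hchain (3 * r) (by omega)).symm
      have h3 : τ (3 * r + 1) ≤ τ (3 * m) := hmono _ _ (by omega) (by omega)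
      have hdist : τ (3 * m) - τ (3 * r + 1)
          ≤ Nat.dist (nextReq σ T (b (3 * r))) (ω (b (3 * r))) := by
        rw [h2, Nat.dist_eq_sub_of_le (le_trans h3 h1)]
        omega
      have hsub : (Lns.filter fun r' => r ≤ r') ⊆ Finset.Ico r m := by
        intro x hx
        obtain ⟨hx1, hx2⟩ := Finset.mem_filter.1 hx
        rw [hLdef, Finset.mem_filter, Finset.mem_range] at hx1
        exact Finset.mem_Ico.2 ⟨hx2, hx1.1⟩
      have htel := hP r hrm m hrm le_rfl
      have hsum2 : ∑ r' ∈ Lns.filter (fun r' => r ≤ r'), (τ (3 * r' + 2) - τ (3 * r' + 1))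
          ≤ ∑ r' ∈ Finset.Ico r m, (τ (3 * r' + 2) - τ (3 * r' + 1)) :=
        Finset.sum_le_sum_of_subset hsub
      have hsum1 : (k + 1) * (Lns.filter fun r' => r ≤ r').card
          ≤ 10 * ∑ r' ∈ Lns.filter (fun r' => r ≤ r'),
              (τ (3 * r' + 2) - τ (3 * r' + 1)) := by
        rw [Finset.mul_sum]
        calc (k + 1) * (Lns.filter fun r' => r ≤ r').card
            = ∑ _r' ∈ Lns.filter (fun r' => r ≤ r'), (k + 1) := by
              rw [Finset.sum_const, smul_eq_mul, mul_comm]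
          _ ≤ ∑ r' ∈ Lns.filter (fun r' => r ≤ r'),
                10 * (τ (3 * r' + 2) - τ (3 * r' + 1)) := by
              apply Finset.sum_le_sum
              intro r' hr'
              have hx1 := (Finset.mem_filter.1 hr').1
              rw [hLdef, Finset.mem_filter] at hx1
              have := hx1.2
              omega
      calc (k + 1) * (Lns.filter fun r' => r ≤ r').card
          ≤ 10 * ∑ r' ∈ Lns.filter (fun r' => r ≤ r'),
              (τ (3 * r' + 2) - τ (3 * r' + 1)) := hsum1
        _ ≤ 10 * ∑ r' ∈ Finset.Ico r m, (τ (3 * r' + 2) - τ (3 * r' + 1)) := by omega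
        _ ≤ 10 * (τ (3 * m) - τ (3 * r + 1)) := by omega
        _ ≤ 10 * Nat.dist (nextReq σ T (b (3 * r))) (ω (b (3 * r))) := by omega
    have hagg : (k + 1) * ∑ r ∈ Lns, (Lns.filter fun r' => r ≤ r').card
        ≤ 10 * ∑ r ∈ Lns, Nat.dist (nextReq σ T (b (3 * r))) (ω (b (3 * r))) := by
      rw [Finset.mul_sum, Finset.mul_sum]
      exact Finset.sum_le_sum hkey
    have hpair := count_pairs_le Lns
    have hembed : ∑ r ∈ Lns, Nat.dist (nextReq σ T (b (3 * r))) (ω (b (3 * r))) ≤ N := by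
      rw [hNdef]
      have hinj : ∀ x ∈ Lns, ∀ y ∈ Lns, 3 * x = 3 * y → x = y := by
        intro x _ y _ hxy; omega
      rw [show (∑ r ∈ Lns, Nat.dist (nextReq σ T (b (3 * r))) (ω (b (3 * r))))
          = ∑ i ∈ Lns.image (fun r => 3 * r), Nat.dist (nextReq σ T (b i)) (ω (b i)) from
        (Finset.sum_image (f := fun i => Nat.dist (nextReq σ T (b i)) (ω (b i))) hinj).symm]
      apply Finset.sum_le_sum_of_subset
      intro x hx
      obtain ⟨r, hr, rfl⟩ := Finset.mem_image.1 hx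
      rw [hLdef, Finset.mem_filter, Finset.mem_range] at hr
      exact Finset.mem_range.2 (by omega)
    have hcard2 : (m - ψ) ^ 2 ≤ Lns.card * (Lns.card + 1) := by
      have h1 : (m - ψ) ^ 2 ≤ Lns.card ^ 2 := Nat.pow_le_pow_left hn 2
      have h2 : Lns.card ^ 2 ≤ Lns.card * (Lns.card + 1) := by
        rw [pow_two]
        exact Nat.mul_le_mul_left _ (Nat.le_succ _)
      omega
    calc k * (m - ψ) ^ 2 ≤ (k + 1) * (Lns.card * (Lns.card + 1)) :=
        Nat.mul_le_mul (by omega) hcard2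
      _ ≤ (k + 1) * (2 * ∑ r ∈ Lns, (Lns.filter fun r' => r ≤ r').card) :=
        Nat.mul_le_mul_left _ hpair
      _ = 2 * ((k + 1) * ∑ r ∈ Lns, (Lns.filter fun r' => r ≤ r').card) := by ring
      _ ≤ 2 * (10 * ∑ r ∈ Lns, Nat.dist (nextReq σ T (b (3 * r))) (ω (b (3 * r)))) :=
        Nat.mul_le_mul_left _ hagg
      _ = 20 * ∑ r ∈ Lns, Nat.dist (nextReq σ T (b (3 * r))) (ω (b (3 * r))) := by ring
      _ ≤ 20 * N := Nat.mul_le_mul_left _ hembed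
  · -- Case B: the prediction of `a` is small; use the right group (Corrector steps).
    set Rns := (Finset.Ico m (2 * m)).filter
        (fun r => ¬ 10 * (τ (3 * r + 2) - τ (3 * r + 1)) ≤ k) with hRdef
    have hRcard : ((Finset.Ico m (2 * m)).filter
        (fun r => 10 * (τ (3 * r + 2) - τ (3 * r + 1)) ≤ k)).card + Rns.card = m := by
      rw [hRdef, Finset.card_filter_add_card_filter_not, Nat.card_Ico]
      omega
    have hn : m - ψ ≤ Rns.card := by
      have hL : ((Finset.Ico m (2 * m)).filter
          (fun r => 10 * (τ (3 * r + 2) - τ (3 * r + 1)) ≤ k)).card ≤ ψ := by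
        rw [hψ]; exact le_max_right _ _
      omega
    have hkey : ∀ r ∈ Rns, (k + 1) * (Rns.filter fun r' => r' ≤ r).card
        ≤ 10 * Nat.dist (nextReq σ T (b (3 * r + 2))) (ω (b (3 * r + 2))) := by
      intro r hrL
      have hrL' := hrL
      rw [hRdef, Finset.mem_filter, Finset.mem_Ico] at hrL'
      obtain ⟨⟨hrm1, hrm2⟩, _⟩ := hrL'
      have hm3 : τ (3 * m) ≤ τ (3 * r + 2) := hmono _ _ (by omega) (by omega)
      have hwa : ω a < τ (3 * r + 2) := lt_of_lt_of_le hcase hm3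
      have h1 : ω (b (3 * r + 2)) ≤ ω a := hcorr r (by omega) hwa
      have h2 : τ (3 * r + 2) < nextReq σ T (b (3 * r + 2)) := hnu_gt _ (by omega)
      have hdist : τ (3 * r + 2) - τ (3 * m)
          ≤ Nat.dist (nextReq σ T (b (3 * r + 2))) (ω (b (3 * r + 2))) := by
        rw [Nat.dist_eq_sub_of_le_right (by omega : ω (b (3 * r + 2)) ≤
          nextReq σ T (b (3 * r + 2)))]
        omega
      have hsub : (Rns.filter fun r' => r' ≤ r) ⊆ Finset.Icc m r := by
        intro x hx
        obtain ⟨hx1, hx2⟩ := Finset.mem_filter.1 hx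
        rw [hRdef, Finset.mem_filter, Finset.mem_Ico] at hx1
        exact Finset.mem_Icc.2 ⟨hx1.1.1, hx2⟩
      have htel := hQ2 r hrm1 hrm2
      have hsum2 : ∑ r' ∈ Rns.filter (fun r' => r' ≤ r), (τ (3 * r' + 2) - τ (3 * r' + 1))
          ≤ ∑ r' ∈ Finset.Icc m r, (τ (3 * r' + 2) - τ (3 * r' + 1)) :=
        Finset.sum_le_sum_of_subset hsub
      have hsum1 : (k + 1) * (Rns.filter fun r' => r' ≤ r).card
          ≤ 10 * ∑ r' ∈ Rns.filter (fun r' => r' ≤ r),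
              (τ (3 * r' + 2) - τ (3 * r' + 1)) := by
        rw [Finset.mul_sum]
        calc (k + 1) * (Rns.filter fun r' => r' ≤ r).card
            = ∑ _r' ∈ Rns.filter (fun r' => r' ≤ r), (k + 1) := by
              rw [Finset.sum_const, smul_eq_mul, mul_comm]
          _ ≤ ∑ r' ∈ Rns.filter (fun r' => r' ≤ r),
                10 * (τ (3 * r' + 2) - τ (3 * r' + 1)) := by
              apply Finset.sum_le_sum
              intro r' hr'
              have hx1 := (Finset.mem_filter.1 hr').1
              rw [hRdef, Finset.mem_filter] at hx1
              have := hx1.2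
              omega
      calc (k + 1) * (Rns.filter fun r' => r' ≤ r).card
          ≤ 10 * ∑ r' ∈ Rns.filter (fun r' => r' ≤ r),
              (τ (3 * r' + 2) - τ (3 * r' + 1)) := hsum1
        _ ≤ 10 * ∑ r' ∈ Finset.Icc m r, (τ (3 * r' + 2) - τ (3 * r' + 1)) := by omega
        _ ≤ 10 * (τ (3 * r + 2) - τ (3 * m)) := by omega
        _ ≤ 10 * Nat.dist (nextReq σ T (b (3 * r + 2))) (ω (b (3 * r + 2))) := by omega
    have hagg : (k + 1) * ∑ r ∈ Rns, (Rns.filter fun r' => r' ≤ r).card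
        ≤ 10 * ∑ r ∈ Rns, Nat.dist (nextReq σ T (b (3 * r + 2))) (ω (b (3 * r + 2))) := by
      rw [Finset.mul_sum, Finset.mul_sum]
      exact Finset.sum_le_sum hkey
    have hpair := count_pairs_le' Rns
    have hembed : ∑ r ∈ Rns, Nat.dist (nextReq σ T (b (3 * r + 2))) (ω (b (3 * r + 2)))
        ≤ N := by
      rw [hNdef]
      have hinj : ∀ x ∈ Rns, ∀ y ∈ Rns, 3 * x + 2 = 3 * y + 2 → x = y := by
        intro x _ y _ hxy; omega
      rw [show (∑ r ∈ Rns, Nat.dist (nextReq σ T (b (3 * r + 2))) (ω (b (3 * r + 2))))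
          = ∑ i ∈ Rns.image (fun r => 3 * r + 2),
              Nat.dist (nextReq σ T (b i)) (ω (b i)) from
        (Finset.sum_image (f := fun i => Nat.dist (nextReq σ T (b i)) (ω (b i))) hinj).symm]
      apply Finset.sum_le_sum_of_subset
      intro x hx
      obtain ⟨r, hr, rfl⟩ := Finset.mem_image.1 hx
      rw [hRdef, Finset.mem_filter, Finset.mem_Ico] at hr
      exact Finset.mem_range.2 (by omega)
    have hcard2 : (m - ψ) ^ 2 ≤ Rns.card * (Rns.card + 1) := by
      have h1 : (m - ψ) ^ 2 ≤ Rns.card ^ 2 := Nat.pow_le_pow_left hn 2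
      have h2 : Rns.card ^ 2 ≤ Rns.card * (Rns.card + 1) := by
        rw [pow_two]
        exact Nat.mul_le_mul_left _ (Nat.le_succ _)
      omega
    calc k * (m - ψ) ^ 2 ≤ (k + 1) * (Rns.card * (Rns.card + 1)) :=
        Nat.mul_le_mul (by omega) hcard2
      _ ≤ (k + 1) * (2 * ∑ r ∈ Rns, (Rns.filter fun r' => r' ≤ r).card) :=
        Nat.mul_le_mul_left _ hpair
      _ = 2 * ((k + 1) * ∑ r ∈ Rns, (Rns.filter fun r' => r' ≤ r).card) := by ring
      _ ≤ 2 * (10 * ∑ r ∈ Rns, Nat.dist (nextReq σ T (b (3 * r + 2)))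
            (ω (b (3 * r + 2)))) :=
        Nat.mul_le_mul_left _ hagg
      _ = 20 * ∑ r ∈ Rns, Nat.dist (nextReq σ T (b (3 * r + 2))) (ω (b (3 * r + 2))) := by
        ring
      _ ≤ 20 * N := Nat.mul_le_mul_left _ hembed

end Caching
end

section
/- Fix γ ∈ (0,1). For every ε > 0 there exists a constant C such that the following holds: for every T ∈ ℕ and every function N : {0,1}^T → {1,…,T}, if ξ = (ξ₁,…,ξ_T) are i.i.d. Bernoulli(γ) random variables and E[N(ξ)] ≥ C, then |E[S(ξ, N(ξ))] − γ·E[N(ξ)]| ≤ ε·E[N(ξ)]. In other words, as T → ∞ and E[N(ξ)] → ∞, the ratio E[S(ξ, N(ξ))] / E[N(ξ)] converges to γ. -/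
namespace Caching

attribute [local instance low] Classical.propDecidable

variable {S : Type} [DecidableEq S]

section Aux

variable (γ : ℝ)

noncomputable def Yc (b : Bool) : ℝ := (if b then 1 else 0) - γ

noncomputable def ec (c : ℕ) : ℝ := γ * (1 - γ) ^ c + (1 - γ) * (-γ) ^ c

lemma ec_sum (c : ℕ) :
    ∑ b : Bool, (if b then γ else 1 - γ) * (Yc γ b) ^ c = ec γ c := by
  rw [Fintype.sum_bool]
  norm_num [Yc, ec]

lemma ec_zero : ec γ 0 = 1 := by simp [ec]

lemma ec_one : ec γ 1 = 0 := by simp [ec]; ring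

lemma abs_ec_le_one (h0 : 0 ≤ γ) (h1 : γ ≤ 1) (c : ℕ) : |ec γ c| ≤ 1 := by
  have h1' : 0 ≤ 1 - γ := by linarith
  have e1 : |(1 - γ) ^ c| ≤ 1 := by
    rw [abs_pow]; apply pow_le_one₀ (abs_nonneg _); rw [abs_of_nonneg h1']; linarith
  have e2 : |(-γ) ^ c| ≤ 1 := by
    rw [abs_pow]; apply pow_le_one₀ (abs_nonneg _); rw [abs_neg, abs_of_nonneg h0]; linarith
  calc |ec γ c| ≤ |γ * (1 - γ) ^ c| + |(1 - γ) * (-γ) ^ c| := abs_add_le _ _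
    _ = γ * |(1 - γ) ^ c| + (1 - γ) * |(-γ) ^ c| := by
        rw [abs_mul, abs_mul, abs_of_nonneg h0, abs_of_nonneg h1']
    _ ≤ γ * 1 + (1 - γ) * 1 := by
        gcongr
    _ = 1 := by ring

lemma bernWeight_nonneg (h0 : 0 ≤ γ) (h1 : γ ≤ 1) {T : ℕ} (x : Fin T → Bool) :
    0 ≤ bernWeight γ x := by
  apply Finset.prod_nonneg
  intro i _
  split <;> linarith

/-- number of indices below m -/
lemma card_lt_filter (T m : ℕ) (h : m ≤ T) :
    (Finset.univ.filter fun i : Fin T => (i : ℕ) < m).card = m := by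
  have : (Finset.univ.filter fun i : Fin T => (i : ℕ) < m) =
      (Finset.range m).attachFin (fun n hn => lt_of_lt_of_le (Finset.mem_range.mp hn) h) := by
    ext i
    simp [Finset.mem_attachFin]
  rw [this, Finset.card_attachFin, Finset.card_range]


/-- counting functions Fin 6 → s with no fiber of size exactly 1 -/
lemma count_bad {T : ℕ} (s : Finset (Fin T)) :
    (((Fintype.piFinset fun _ : Fin 6 => s)).filter fun g =>
      ∀ i : Fin T, (Finset.univ.filter fun j : Fin 6 => g j = i).card ≠ 1).card
      ≤ 729 * s.card ^ 3 := by
  by_cases hs : s.card ≤ 9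
  · calc _ ≤ (Fintype.piFinset fun _ : Fin 6 => s).card := Finset.card_filter_le _ _
      _ = s.card ^ 6 := by simp [Fintype.card_piFinset]
      _ = s.card ^ 3 * s.card ^ 3 := by ring
      _ ≤ 729 * s.card ^ 3 := by
          have h3 : s.card ^ 3 ≤ 729 := by calc s.card ^ 3 ≤ 9 ^ 3 := Nat.pow_le_pow_left hs 3
                                             _ = 729 := by norm_num
          exact Nat.mul_le_mul_right _ h3
  · push_neg at hs
    have hsub : (((Fintype.piFinset fun _ : Fin 6 => s)).filter fun g =>
        ∀ i : Fin T, (Finset.univ.filter fun j : Fin 6 => g j = i).card ≠ 1) ⊆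
        (s.powersetCard 3).biUnion fun A => Fintype.piFinset fun _ : Fin 6 => A := by
      intro g hg
      rw [Finset.mem_filter] at hg
      obtain ⟨hg1, hg2⟩ := hg
      have hmaps : ∀ j : Fin 6, g j ∈ s := by
        intro j; exact Fintype.mem_piFinset.mp hg1 j
      set I := Finset.image g Finset.univ with hI
      have hIs : I ⊆ s := by
        intro i hi
        obtain ⟨j, _, rfl⟩ := Finset.mem_image.mp hi
        exact hmaps j
      have hsum : ∑ i ∈ I, (Finset.univ.filter fun j : Fin 6 => g j = i).card = 6 := by
        rw [← Finset.card_eq_sum_card_fiberwise (fun j _ => Finset.mem_image_of_mem g (Finset.mem_univ j))]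
        simp
      have hcard : I.card ≤ 3 := by
        by_contra hc
        push_neg at hc
        have h2 : ∀ i ∈ I, 2 ≤ (Finset.univ.filter fun j : Fin 6 => g j = i).card := by
          intro i hi
          obtain ⟨j, _, rfl⟩ := Finset.mem_image.mp hi
          have h1 : 1 ≤ (Finset.univ.filter fun j' : Fin 6 => g j' = g j).card := by
            rw [Nat.succ_le_iff, Finset.card_pos]
            exact ⟨j, by simp⟩
          have := hg2 (g j)
          omega
        have : 2 * I.card ≤ 6 := by
          calc 2 * I.card = ∑ _i ∈ I, 2 := by rw [Finset.sum_const]; ring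
            _ ≤ ∑ i ∈ I, (Finset.univ.filter fun j : Fin 6 => g j = i).card :=
                Finset.sum_le_sum h2
            _ = 6 := hsum
        omega
      obtain ⟨A, hIA, hAs, hA3⟩ := Finset.exists_subsuperset_card_eq hIs hcard (by omega)
      apply Finset.mem_biUnion.mpr
      refine ⟨A, Finset.mem_powersetCard.mpr ⟨hAs, hA3⟩, ?_⟩
      apply Fintype.mem_piFinset.mpr
      intro j
      exact hIA (Finset.mem_image_of_mem g (Finset.mem_univ j))
    calc _ ≤ ((s.powersetCard 3).biUnion fun A => Fintype.piFinset fun _ : Fin 6 => A).card :=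
          Finset.card_le_card hsub
      _ ≤ ∑ A ∈ s.powersetCard 3, (Fintype.piFinset fun _ : Fin 6 => (A : Finset (Fin T))).card :=
          Finset.card_biUnion_le
      _ ≤ ∑ A ∈ s.powersetCard 3, 729 := by
          apply Finset.sum_le_sum
          intro A hA
          have : A.card = 3 := (Finset.mem_powersetCard.mp hA).2
          simp [Fintype.card_piFinset, this]
      _ = (s.card.choose 3) * 729 := by rw [Finset.sum_const, Finset.card_powersetCard]; ring
      _ ≤ s.card ^ 3 * 729 := Nat.mul_le_mul_right _ (Nat.choose_le_pow s.card 3)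
      _ = 729 * s.card ^ 3 := by ring

lemma moment6 (h0 : 0 ≤ γ) (h1 : γ ≤ 1) {T : ℕ} (s : Finset (Fin T)) :
    |∑ x : Fin T → Bool, bernWeight γ x * (∑ i ∈ s, Yc γ (x i)) ^ 6|
      ≤ 729 * (s.card : ℝ) ^ 3 := by
  classical
  set mult : (Fin 6 → Fin T) → Fin T → ℕ :=
    fun g i => (Finset.univ.filter fun j : Fin 6 => g j = i).card with hmult
  have step1 : ∀ x : Fin T → Bool,
      bernWeight γ x * (∑ i ∈ s, Yc γ (x i)) ^ 6 =
      ∑ g ∈ Fintype.piFinset fun _ : Fin 6 => s,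
        ∏ i : Fin T, ((if x i then γ else 1 - γ) * Yc γ (x i) ^ mult g i) := by
    intro x
    rw [Finset.sum_pow']
    rw [Finset.mul_sum]
    apply Finset.sum_congr rfl
    intro g _
    have hfib : ∏ j : Fin 6, Yc γ (x (g j)) = ∏ i : Fin T, Yc γ (x i) ^ mult g i := by
      rw [← Finset.prod_fiberwise' Finset.univ g (fun i => Yc γ (x i))]
      apply Finset.prod_congr rfl
      intro i _
      rw [Finset.prod_const]
    rw [hfib, bernWeight, ← Finset.prod_mul_distrib]
  have step2 : ∀ g : Fin 6 → Fin T,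
      ∑ x : Fin T → Bool,
        ∏ i : Fin T, ((if x i then γ else 1 - γ) * Yc γ (x i) ^ mult g i) =
      ∏ i : Fin T, ec γ (mult g i) := by
    intro g
    rw [← Fintype.prod_sum (fun i (b : Bool) => (if b then γ else 1 - γ) * Yc γ b ^ mult g i)]
    apply Finset.prod_congr rfl
    intro i _
    exact ec_sum γ (mult g i)
  calc |∑ x : Fin T → Bool, bernWeight γ x * (∑ i ∈ s, Yc γ (x i)) ^ 6|
      = |∑ g ∈ Fintype.piFinset fun _ : Fin 6 => s, ∏ i : Fin T, ec γ (mult g i)| := by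
        rw [Finset.sum_congr rfl fun x _ => step1 x, Finset.sum_comm,
          Finset.sum_congr rfl fun g _ => step2 g]
    _ ≤ ∑ g ∈ Fintype.piFinset fun _ : Fin 6 => s, |∏ i : Fin T, ec γ (mult g i)| :=
        Finset.abs_sum_le_sum_abs _ _
    _ ≤ ∑ g ∈ Fintype.piFinset fun _ : Fin 6 => s,
          (if ∀ i : Fin T, mult g i ≠ 1 then (1 : ℝ) else 0) := by
        apply Finset.sum_le_sum
        intro g _
        split
        · next hall =>
          rw [Finset.abs_prod]
          apply Finset.prod_le_one (fun i _ => abs_nonneg _)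
          intro i _
          exact abs_ec_le_one γ h0 h1 _
        · next hall =>
          push_neg at hall
          obtain ⟨i, hi⟩ := hall
          rw [Finset.abs_prod]
          apply le_of_eq
          apply Finset.prod_eq_zero (Finset.mem_univ i)
          rw [hi, ec_one, abs_zero]
    _ = (((Fintype.piFinset fun _ : Fin 6 => s).filter fun g =>
          ∀ i : Fin T, mult g i ≠ 1).card : ℝ) := by
        rw [Finset.sum_boole]
    _ ≤ 729 * (s.card : ℝ) ^ 3 := by
        have := count_bad s
        calc (((Fintype.piFinset fun _ : Fin 6 => s).filter fun g =>
              ∀ i : Fin T, mult g i ≠ 1).card : ℝ)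
            ≤ ((729 * s.card ^ 3 : ℕ) : ℝ) := by exact_mod_cast this
          _ = 729 * (s.card : ℝ) ^ 3 := by push_cast; ring

lemma basel (T : ℕ) : ∑ m ∈ Finset.Icc 1 T, (1 : ℝ) / (m : ℝ) ^ 2 ≤ 2 := by
  have key : ∀ T : ℕ, ∑ m ∈ Finset.Icc 1 T, (1 : ℝ) / (m : ℝ) ^ 2 ≤ 2 - 2 / (T + 1) := by
    intro T
    induction T with
    | zero => simp
    | succ T ih =>
      rw [Finset.sum_Icc_succ_top (Nat.le_add_left 1 T)]
      rw [add_comm]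
      push_cast
      have h1 : (0 : ℝ) < (T : ℝ) + 1 := by positivity
      have h2 : (0 : ℝ) < (T : ℝ) + 2 := by positivity
      have key2 : 1 / ((T : ℝ) + 1) ^ 2 + (2 - 2 / (T + 1)) ≤ 2 - 2 / ((T : ℝ) + 2) := by
        have e1 : 1 / ((T : ℝ) + 1) ^ 2 ≤ 2 / ((T : ℝ) + 1) - 2 / ((T : ℝ) + 2) := by
          rw [div_sub_div _ _ (ne_of_gt h1) (ne_of_gt h2),
            div_le_div_iff₀ (by positivity) (by positivity)]
          nlinarith
        linarith
      calc 1 / ((T : ℝ) + 1) ^ 2 + ∑ m ∈ Finset.Icc 1 T, (1 : ℝ) / (m : ℝ) ^ 2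
          ≤ 1 / ((T : ℝ) + 1) ^ 2 + (2 - 2 / (T + 1)) := by linarith
        _ ≤ 2 - 2 / ((T : ℝ) + 2) := key2
        _ = 2 - 2 / (((T : ℝ) + 1) + 1) := by ring_nf
  calc ∑ m ∈ Finset.Icc 1 T, (1 : ℝ) / (m : ℝ) ^ 2 ≤ 2 - 2 / (T + 1) := key T
    _ ≤ 2 := by
        have : (0 : ℝ) < (T : ℝ) + 1 := by positivity
        have : 0 ≤ 2 / ((T : ℝ) + 1) := by positivity
        linarith

lemma scount_eq {T : ℕ} (x : Fin T → Bool) (m : ℕ) (h : m ≤ T) :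
    ∑ i ∈ Finset.univ.filter (fun i : Fin T => (i : ℕ) < m), Yc γ (x i)
      = (scount x m : ℝ) - γ * m := by
  classical
  have hcard := card_lt_filter T m h
  have h2 : (scount x m : ℝ) =
      ∑ i ∈ Finset.univ.filter (fun i : Fin T => (i : ℕ) < m),
        (if x i then (1 : ℝ) else 0) := by
    rw [Finset.sum_boole, scount]
    norm_num
    congr 1
    rw [Finset.filter_filter]
  rw [h2]
  unfold Yc
  rw [Finset.sum_sub_distrib, Finset.sum_const, hcard]
  push_cast
  ring

lemma pointwise (ε : ℝ) (hε : 0 < ε) {T : ℕ} (x : Fin T → Bool) (m : ℕ)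
    (h1 : 1 ≤ m) (h2 : m ≤ T) :
    |(scount x m : ℝ) - γ * m| ≤ ε / 2 * m +
      ∑ m' ∈ Finset.Icc 1 T,
        (∑ i ∈ Finset.univ.filter (fun i : Fin T => (i : ℕ) < m'), Yc γ (x i)) ^ 6
          * (2 / (ε * m')) ^ 5 := by
  set D : ℕ → ℝ := fun m' =>
    ∑ i ∈ Finset.univ.filter (fun i : Fin T => (i : ℕ) < m'), Yc γ (x i) with hD
  have hterm : ∀ m' ∈ Finset.Icc 1 T, (0 : ℝ) ≤ D m' ^ 6 * (2 / (ε * m')) ^ 5 := by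
    intro m' hm'
    have hm'1 : 1 ≤ m' := (Finset.mem_Icc.mp hm').1
    have : (0 : ℝ) < (m' : ℝ) := by exact_mod_cast Nat.lt_of_lt_of_le Nat.zero_lt_one hm'1
    positivity
  have hsingle : D m ^ 6 * (2 / (ε * m)) ^ 5 ≤
      ∑ m' ∈ Finset.Icc 1 T, D m' ^ 6 * (2 / (ε * m')) ^ 5 :=
    Finset.single_le_sum hterm (Finset.mem_Icc.mpr ⟨h1, h2⟩)
  rw [← scount_eq γ x m h2]
  by_cases hc : |D m| ≤ ε / 2 * m
  · have h0 : (0 : ℝ) ≤ ∑ m' ∈ Finset.Icc 1 T, D m' ^ 6 * (2 / (ε * m')) ^ 5 :=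
      Finset.sum_nonneg hterm
    linarith
  · push_neg at hc
    have hm : (0 : ℝ) < (m : ℝ) := by exact_mod_cast Nat.lt_of_lt_of_le Nat.zero_lt_one h1
    set B : ℝ := ε * m / 2 with hB
    have hBpos : 0 < B := by positivity
    have hBlt : B < |D m| := by rw [hB]; linarith
    have habs : |D m| ≤ D m ^ 6 * (2 / (ε * m)) ^ 5 := by
      have h6 : D m ^ 6 = |D m| ^ 6 := by
        rw [← abs_pow]
        exact (abs_of_nonneg (by positivity)).symm
      have hmul : |D m| * B ^ 5 ≤ |D m| * |D m| ^ 5 := by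
        apply mul_le_mul_of_nonneg_left _ (abs_nonneg _)
        exact pow_le_pow_left₀ hBpos.le hBlt.le 5
      have heq : (2 / (ε * m)) ^ 5 = 1 / B ^ 5 := by
        rw [hB]
        have hεm : (ε * (m:ℝ)) ≠ 0 := by positivity
        field_simp
      rw [heq, h6]
      rw [mul_one_div, le_div_iff₀ (by positivity)]
      calc |D m| * B ^ 5 ≤ |D m| * |D m| ^ 5 := hmul
        _ = |D m| ^ 6 := by ring
    have hε2 : (0:ℝ) ≤ ε / 2 * m := by positivity
    linarith

end Aux


/-- For i.i.d. Bernoulli(γ) bits `ξ` and any function `N` of the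
realization with `1 ≤ N(ξ) ≤ T`, the ratio `E[S(ξ, N(ξ))] / E[N(ξ)]` converges to `γ`
as `E[N(ξ)] → ∞`: for every `ε > 0` there is `C` such that `E[N(ξ)] ≥ C` implies
`|E[S(ξ, N(ξ))] − γ·E[N(ξ)]| ≤ ε·E[N(ξ)]`. -/
theorem stmt12 (γ : ℝ) (hγ0 : 0 < γ) (hγ1 : γ < 1) :
    ∀ ε > (0 : ℝ), ∃ C : ℝ,
      ∀ (T : ℕ) (N : (Fin T → Bool) → ℕ), (∀ x, 1 ≤ N x ∧ N x ≤ T) →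
        C ≤ ∑ x : Fin T → Bool, bernWeight γ x * N x →
        |(∑ x : Fin T → Bool, bernWeight γ x * scount x (N x)) -
            γ * ∑ x : Fin T → Bool, bernWeight γ x * N x| ≤
          ε * ∑ x : Fin T → Bool, bernWeight γ x * N x := by
  intro ε hε
  refine ⟨93312 / ε ^ 6, ?_⟩
  intro T N hN hC
  have hγ0' : (0 : ℝ) ≤ γ := hγ0.le
  have hγ1' : γ ≤ 1 := hγ1.le
  have hWnn : ∀ x : Fin T → Bool, 0 ≤ bernWeight γ x :=
    fun x => bernWeight_nonneg γ hγ0' hγ1' x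
  set E := ∑ x : Fin T → Bool, bernWeight γ x * N x with hE
  set Gf : (Fin T → Bool) → ℝ := fun x =>
    ∑ m' ∈ Finset.Icc 1 T,
      (∑ i ∈ Finset.univ.filter (fun i : Fin T => (i : ℕ) < m'), Yc γ (x i)) ^ 6
        * (2 / (ε * m')) ^ 5 with hGf
  have hdiff : (∑ x : Fin T → Bool, bernWeight γ x * scount x (N x)) - γ * E
      = ∑ x : Fin T → Bool, bernWeight γ x * ((scount x (N x) : ℝ) - γ * N x) := by
    rw [hE, Finset.mul_sum, ← Finset.sum_sub_distrib]
    apply Finset.sum_congr rfl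
    intro x _
    ring
  have hpt : ∀ x : Fin T → Bool,
      |(scount x (N x) : ℝ) - γ * N x| ≤ ε / 2 * N x + Gf x :=
    fun x => pointwise γ ε hε x (N x) (hN x).1 (hN x).2
  have hGsum : ∑ x : Fin T → Bool, bernWeight γ x * Gf x ≤ 46656 / ε ^ 5 := by
    have hswap : ∑ x : Fin T → Bool, bernWeight γ x * Gf x =
        ∑ m' ∈ Finset.Icc 1 T, (2 / (ε * m')) ^ 5 *
          ∑ x : Fin T → Bool, bernWeight γ x *
            (∑ i ∈ Finset.univ.filter (fun i : Fin T => (i : ℕ) < m'), Yc γ (x i)) ^ 6 := by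
      rw [hGf]
      simp only [Finset.mul_sum]
      rw [Finset.sum_comm]
      apply Finset.sum_congr rfl
      intro m' _
      apply Finset.sum_congr rfl
      intro x _
      ring
    rw [hswap]
    calc ∑ m' ∈ Finset.Icc 1 T, (2 / (ε * m')) ^ 5 *
          ∑ x : Fin T → Bool, bernWeight γ x *
            (∑ i ∈ Finset.univ.filter (fun i : Fin T => (i : ℕ) < m'), Yc γ (x i)) ^ 6
        ≤ ∑ m' ∈ Finset.Icc 1 T, (23328 / ε ^ 5) * (1 / (m' : ℝ) ^ 2) := by
          apply Finset.sum_le_sum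
          intro m' hm'
          obtain ⟨hm1, hm2⟩ := Finset.mem_Icc.mp hm'
          have hmpos : (0 : ℝ) < (m' : ℝ) := by
            exact_mod_cast Nat.lt_of_lt_of_le Nat.zero_lt_one hm1
          have hmom : ∑ x : Fin T → Bool, bernWeight γ x *
              (∑ i ∈ Finset.univ.filter (fun i : Fin T => (i : ℕ) < m'), Yc γ (x i)) ^ 6
              ≤ 729 * (m' : ℝ) ^ 3 := by
            have h6 := moment6 γ hγ0' hγ1'
              (Finset.univ.filter fun i : Fin T => (i : ℕ) < m')
            rw [card_lt_filter T m' hm2] at h6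
            exact le_trans (le_abs_self _) h6
          calc (2 / (ε * m')) ^ 5 *
              ∑ x : Fin T → Bool, bernWeight γ x *
                (∑ i ∈ Finset.univ.filter (fun i : Fin T => (i : ℕ) < m'), Yc γ (x i)) ^ 6
              ≤ (2 / (ε * m')) ^ 5 * (729 * (m' : ℝ) ^ 3) := by
                apply mul_le_mul_of_nonneg_left hmom
                positivity
            _ = (23328 / ε ^ 5) * (1 / (m' : ℝ) ^ 2) := by
                field_simp
                ring
      _ = (23328 / ε ^ 5) * ∑ m' ∈ Finset.Icc 1 T, (1 / (m' : ℝ) ^ 2) := by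
          rw [Finset.mul_sum]
      _ ≤ (23328 / ε ^ 5) * 2 := by
          apply mul_le_mul_of_nonneg_left (basel T)
          positivity
      _ = 46656 / ε ^ 5 := by ring
  have hmain : |∑ x : Fin T → Bool, bernWeight γ x * ((scount x (N x) : ℝ) - γ * N x)|
      ≤ ε / 2 * E + 46656 / ε ^ 5 := by
    calc |∑ x : Fin T → Bool, bernWeight γ x * ((scount x (N x) : ℝ) - γ * N x)|
        ≤ ∑ x : Fin T → Bool, |bernWeight γ x * ((scount x (N x) : ℝ) - γ * N x)| :=
          Finset.abs_sum_le_sum_abs _ _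
      _ = ∑ x : Fin T → Bool, bernWeight γ x * |(scount x (N x) : ℝ) - γ * N x| := by
          apply Finset.sum_congr rfl
          intro x _
          rw [abs_mul, abs_of_nonneg (hWnn x)]
      _ ≤ ∑ x : Fin T → Bool, bernWeight γ x * (ε / 2 * N x + Gf x) := by
          apply Finset.sum_le_sum
          intro x _
          exact mul_le_mul_of_nonneg_left (hpt x) (hWnn x)
      _ = ε / 2 * E + ∑ x : Fin T → Bool, bernWeight γ x * Gf x := by
          rw [hE, Finset.mul_sum, ← Finset.sum_add_distrib]
          apply Finset.sum_congr rfl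
          intro x _
          ring
      _ ≤ ε / 2 * E + 46656 / ε ^ 5 := by linarith
  have hK : 46656 / ε ^ 5 ≤ ε / 2 * E := by
    have h1 : ε / 2 * (93312 / ε ^ 6) = 46656 / ε ^ 5 := by
      field_simp
      ring
    calc 46656 / ε ^ 5 = ε / 2 * (93312 / ε ^ 6) := h1.symm
      _ ≤ ε / 2 * E := by
          apply mul_le_mul_of_nonneg_left hC
          positivity
  rw [hdiff]
  calc |∑ x : Fin T → Bool, bernWeight γ x * ((scount x (N x) : ℝ) - γ * N x)|
      ≤ ε / 2 * E + 46656 / ε ^ 5 := hmain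
    _ ≤ ε / 2 * E + ε / 2 * E := by linarith
    _ = ε * E := by ring

end Caching
end
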